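/- Let a > 0 and G_c > 0, define F(h) = G_c·h·(1 + ⌈2a/h⌉ + √(π·⌈2a/h⌉)) for h > 0, and set λ = √2/(√2 − 1). Then there exist constants C > 0 and h₀ > 0 such that for all 0 < h ≤ h₀, |λ·F(h) + (1 − λ)·F(2h) − 2a·G_c| ≤ C·h; i.e., the Richardson-extrapolated EE fracture energy E_{EE+RE,h} = λ F(h) + (1−λ) F(2h) equals G_c·2a + O(h), so extrapolation removes the O(h^{1/2}) error term. -/
import Mathlib

lemma sqrt_subadd (x y : ℝ) (hx : 0 ≤ x) (hy : 0 ≤ y) :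
    Real.sqrt (x + y) ≤ Real.sqrt x + Real.sqrt y := by
  have h : x + y ≤ (Real.sqrt x + Real.sqrt y)^2 := by
    have hx' := Real.sq_sqrt hx
    have hy' := Real.sq_sqrt hy
    nlinarith [Real.sqrt_nonneg x, Real.sqrt_nonneg y]
  calc Real.sqrt (x + y) ≤ Real.sqrt ((Real.sqrt x + Real.sqrt y)^2) :=
        Real.sqrt_le_sqrt h
    _ = Real.sqrt x + Real.sqrt y := Real.sqrt_sq (by positivity)

/-- Key approximation: `F h` is `2aG_c + G_c√(2πa)√h + O(h)`. -/
lemma key_approx (a Gc : ℝ) (ha : 0 < a) (hGc : 0 < Gc) (h : ℝ) (hh : 0 < h) :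
    |Gc * h * (1 + (⌈2 * a / h⌉ : ℝ) + Real.sqrt (Real.pi * (⌈2 * a / h⌉ : ℝ)))
      - (2 * a * Gc + Gc * (Real.sqrt (2 * Real.pi * a) * Real.sqrt h))| ≤ 4 * Gc * h := by
  set n : ℝ := (⌈2 * a / h⌉ : ℝ) with hn
  have h1 : 2 * a / h ≤ n := Int.le_ceil _
  have h2 : n < 2 * a / h + 1 := Int.ceil_lt_add_one _
  have hna : 2 * a ≤ h * n := by
    rw [div_le_iff₀ hh] at h1; linarith [h1]
  have hnb : h * n < 2 * a + h := by
    have := (lt_div_iff₀ hh).mp (by linarith : n - 1 < 2 * a / h)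
    nlinarith
  have hn0 : 0 ≤ n := by positivity
  have hpi := Real.pi_pos
  -- rewrite h * √(π n) = √(π h (h n))
  have e1 : h * Real.sqrt (Real.pi * n) = Real.sqrt (Real.pi * h * (h * n)) := by
    rw [show Real.pi * h * (h * n) = h^2 * (Real.pi * n) by ring,
      Real.sqrt_mul (show (0:ℝ) ≤ h^2 by positivity) (Real.pi * n), Real.sqrt_sq hh.le]
  -- √(2πa h) vs √(πh (hn)) differ by ≤ √(πh·h) ≤ 2h
  have e2 : Real.sqrt (2 * Real.pi * a) * Real.sqrt h = Real.sqrt (Real.pi * h * (2 * a)) := by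
    rw [← Real.sqrt_mul (by positivity)]; ring_nf
  have key : |Real.sqrt (Real.pi * h * (h * n)) - Real.sqrt (Real.pi * h * (2 * a))| ≤ 2 * h := by
    have hle : Real.sqrt (Real.pi * h * (h * n)) - Real.sqrt (Real.pi * h * (2 * a)) ≥ 0 := by
      have := Real.sqrt_le_sqrt (mul_le_mul_of_nonneg_left hna
        (show (0:ℝ) ≤ Real.pi * h by positivity))
      linarith
    rw [abs_of_nonneg hle]
    have hsplit : Real.pi * h * (h * n) = Real.pi * h * (2 * a) + Real.pi * h * (h * n - 2 * a) := by
      ring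
    have hsub : Real.sqrt (Real.pi * h * (h * n)) ≤
        Real.sqrt (Real.pi * h * (2 * a)) + Real.sqrt (Real.pi * h * (h * n - 2 * a)) := by
      rw [hsplit]; exact sqrt_subadd _ _ (by positivity)
        (mul_nonneg (by positivity) (by linarith))
    have hbd : Real.sqrt (Real.pi * h * (h * n - 2 * a)) ≤ 2 * h := by
      have hd0 : (0:ℝ) ≤ h * n - 2 * a := by linarith
      have hd1 : h * n - 2 * a ≤ h := by linarith
      have h4 : Real.pi * h * (h * n - 2 * a) ≤ (2 * h)^2 := by
        nlinarith [mul_nonneg (mul_nonneg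
            (show (0:ℝ) ≤ 4 - Real.pi by nlinarith [Real.pi_le_four]) hh.le) hd0,
          mul_nonneg hh.le (show (0:ℝ) ≤ h - (h * n - 2 * a) by linarith)]
      calc Real.sqrt (Real.pi * h * (h * n - 2 * a)) ≤ Real.sqrt ((2*h)^2) :=
            Real.sqrt_le_sqrt h4
        _ = 2 * h := Real.sqrt_sq (by positivity)
    linarith
  have expand : Gc * h * (1 + n + Real.sqrt (Real.pi * n))
      - (2 * a * Gc + Gc * (Real.sqrt (2 * Real.pi * a) * Real.sqrt h))
      = Gc * (h + (h * n - 2 * a))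
        + Gc * (Real.sqrt (Real.pi * h * (h * n)) - Real.sqrt (Real.pi * h * (2 * a))) := by
    rw [e2, ← e1]; ring
  rw [expand]
  have b1 : |Gc * (h + (h * n - 2 * a))| ≤ 2 * Gc * h := by
    rw [abs_of_nonneg (by nlinarith)]; nlinarith
  have b2 : |Gc * (Real.sqrt (Real.pi * h * (h * n)) - Real.sqrt (Real.pi * h * (2 * a)))|
      ≤ 2 * Gc * h := by
    rw [abs_mul, abs_of_pos hGc]
    calc Gc * |Real.sqrt (Real.pi * h * (h * n)) - Real.sqrt (Real.pi * h * (2 * a))|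
        ≤ Gc * (2 * h) := by exact mul_le_mul_of_nonneg_left key hGc.le
      _ = 2 * Gc * h := by ring
  calc |Gc * (h + (h * n - 2 * a))
        + Gc * (Real.sqrt (Real.pi * h * (h * n)) - Real.sqrt (Real.pi * h * (2 * a)))|
      ≤ _ + _ := abs_add_le _ _
    _ ≤ 2 * Gc * h + 2 * Gc * h := add_le_add b1 b2
    _ = 4 * Gc * h := by ring

/-- Richardson extrapolation with weight `λ = √2/(√2−1)` of the optimal EE fracture energy
`F(h) = G_c h (1 + ⌈2a/h⌉ + √(π⌈2a/h⌉))` satisfies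
`λ F(h) + (1−λ) F(2h) = 2a·G_c + O(h)` as `h → 0`. -/
theorem richardson_extrapolation (a Gc : ℝ) (ha : 0 < a) (hGc : 0 < Gc)
    (F : ℝ → ℝ)
    (hF : ∀ h : ℝ, F h =
      Gc * h * (1 + (⌈2 * a / h⌉ : ℝ) + Real.sqrt (Real.pi * (⌈2 * a / h⌉ : ℝ))))
    (lam : ℝ) (hlam : lam = Real.sqrt 2 / (Real.sqrt 2 - 1)) :
    ∃ C > (0 : ℝ), ∃ h₀ > (0 : ℝ), ∀ h : ℝ, 0 < h → h ≤ h₀ →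
      |lam * F h + (1 - lam) * F (2 * h) - 2 * a * Gc| ≤ C * h := by
  have s2 : Real.sqrt 2 * Real.sqrt 2 = 2 := Real.mul_self_sqrt (by norm_num)
  have s2pos : (1:ℝ) < Real.sqrt 2 := by
    nlinarith [Real.sqrt_nonneg 2]
  have s2lt : Real.sqrt 2 < 2 := by nlinarith [Real.sqrt_nonneg 2]
  have hlam' : lam = 2 + Real.sqrt 2 := by
    rw [hlam]
    rw [div_eq_iff (by linarith)]
    nlinarith
  refine ⟨40 * Gc, by positivity, 1, one_pos, fun h hh _ => ?_⟩
  have k1 := key_approx a Gc ha hGc h hh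
  have k2 := key_approx a Gc ha hGc (2 * h) (by linarith)
  rw [hF h, hF (2 * h)] at *
  -- cancellation of the √h terms
  have cancel : lam * (Real.sqrt (2 * Real.pi * a) * Real.sqrt h)
      + (1 - lam) * (Real.sqrt (2 * Real.pi * a) * Real.sqrt (2 * h)) = 0 := by
    have e : Real.sqrt (2 * h) = Real.sqrt 2 * Real.sqrt h :=
      Real.sqrt_mul (by norm_num) h
    have z : lam + (1 - lam) * Real.sqrt 2 = 0 := by
      rw [hlam']; linear_combination -s2
    rw [e]
    linear_combination (Real.sqrt (2 * Real.pi * a) * Real.sqrt h) * z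
  have hlamabs : |lam| ≤ 4 := by rw [hlam', abs_of_pos (by linarith)]; linarith
  have hlamabs2 : |1 - lam| ≤ 3 := by
    rw [hlam', abs_of_nonpos (by linarith)]; linarith
  set A := Gc * h * (1 + (⌈2 * a / h⌉ : ℝ) + Real.sqrt (Real.pi * (⌈2 * a / h⌉ : ℝ)))
  set B := Gc * (2 * h) * (1 + (⌈2 * a / (2 * h)⌉ : ℝ) +
    Real.sqrt (Real.pi * (⌈2 * a / (2 * h)⌉ : ℝ)))
  have decomp : lam * A + (1 - lam) * B - 2 * a * Gc
      = lam * (A - (2 * a * Gc + Gc * (Real.sqrt (2 * Real.pi * a) * Real.sqrt h)))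
        + (1 - lam) * (B - (2 * a * Gc + Gc * (Real.sqrt (2 * Real.pi * a) * Real.sqrt (2 * h))))
        + Gc * (lam * (Real.sqrt (2 * Real.pi * a) * Real.sqrt h)
          + (1 - lam) * (Real.sqrt (2 * Real.pi * a) * Real.sqrt (2 * h))) := by
    ring
  rw [decomp, cancel, mul_zero, add_zero]
  have t1 : |lam * (A - (2 * a * Gc + Gc * (Real.sqrt (2 * Real.pi * a) * Real.sqrt h)))|
      ≤ 4 * (4 * Gc * h) := by
    rw [abs_mul]
    exact mul_le_mul hlamabs k1 (abs_nonneg _) (by norm_num)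
  have t2 : |(1 - lam) * (B - (2 * a * Gc + Gc * (Real.sqrt (2 * Real.pi * a) * Real.sqrt (2 * h))))|
      ≤ 3 * (4 * Gc * (2 * h)) := by
    rw [abs_mul]
    exact mul_le_mul hlamabs2 k2 (abs_nonneg _) (by norm_num)
  calc |_ + _| ≤ _ + _ := abs_add_le _ _
    _ ≤ 4 * (4 * Gc * h) + 3 * (4 * Gc * (2 * h)) := add_le_add t1 t2
    _ = 40 * Gc * h := by ring
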